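/- The number of tilings of a 4×6 rectangle by right trominoes is 18. -/

import Mathlib

set_option maxRecDepth 100000


/-- Translate a set of cells by a vector. -/
def translateBy (v : ℤ × ℤ) (s : Finset (ℤ × ℤ)) : Finset (ℤ × ℤ) :=
  s.image (fun p => (p.1 + v.1, p.2 + v.2))

/-- The cells of a `w × h` rectangle: `[0,w) × [0,h) ∩ ℤ²`
(first coordinate is horizontal). -/
noncomputable def Rect (w h : ℕ) : Finset (ℤ × ℤ) :=
  Finset.Ico (0 : ℤ) (w : ℤ) ×ˢ Finset.Ico (0 : ℤ) (h : ℤ)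

/-- Rotation by 90 degrees. -/
def rot90 (p : ℤ × ℤ) : ℤ × ℤ := (-p.2, p.1)

/-- The four rotations of a base shape. -/
def rotationsOf (base : Finset (ℤ × ℤ)) : Finset (Finset (ℤ × ℤ)) :=
  {base, base.image rot90, (base.image rot90).image rot90,
   ((base.image rot90).image rot90).image rot90}

/-- `T` is a tiling of the region `R` by translated copies of the given shapes:
its members are placed tiles, pairwise disjoint, whose union is `R`. -/
def IsTiling (shapes : Finset (Finset (ℤ × ℤ))) (R : Finset (ℤ × ℤ))
    (T : Finset (Finset (ℤ × ℤ))) : Prop :=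
  (∀ P ∈ T, ∃ s ∈ shapes, ∃ v : ℤ × ℤ, P = translateBy v s) ∧
  (∀ P ∈ T, ∀ Q ∈ T, P ≠ Q → Disjoint P Q) ∧
  T.biUnion id = R

/-- The right tromino and its rotations. -/
def Rshapes : Finset (Finset (ℤ × ℤ)) :=
  rotationsOf {((0, 0) : ℤ × ℤ), (1, 0), (0, 1)}

noncomputable def placements : Finset (Finset (ℤ × ℤ)) :=
  (Rect 6 4).biUnion fun v => Rshapes.image (translateBy v)

lemma placements_sound {P} (h : P ∈ placements) :
    ∃ s ∈ Rshapes, ∃ v : ℤ × ℤ, P = translateBy v s := by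
  simp only [placements, Finset.mem_biUnion, Finset.mem_image] at h
  obtain ⟨v, _, s, hs, rfl⟩ := h
  exact ⟨s, hs, v, rfl⟩

lemma zero_mem_shapes : ∀ s ∈ Rshapes, ((0,0) : ℤ×ℤ) ∈ s := by decide

lemma placements_nonempty : ∀ P ∈ placements, P.Nonempty := by decide

lemma placements_complete {s v} (hs : s ∈ Rshapes)
    (hsub : translateBy v s ⊆ Rect 6 4) : translateBy v s ∈ placements := by
  have hv : v ∈ translateBy v s := by
    refine Finset.mem_image.2 ⟨(0,0), zero_mem_shapes s hs, by simp⟩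
  exact Finset.mem_biUnion.2 ⟨v, hsub hv, Finset.mem_image.2 ⟨s, hs, rfl⟩⟩

def cellList : List (ℤ × ℤ) :=
  (List.range 4).flatMap fun y => (List.range 6).map fun x => ((x:ℤ),(y:ℤ))

lemma rect_sub_cellList : ∀ p ∈ Rect 6 4, p ∈ cellList := by decide

noncomputable def enum : ℕ → Finset (ℤ × ℤ) → Finset (Finset (Finset (ℤ × ℤ)))
  | 0, R => if R = ∅ then {∅} else ∅
  | fuel+1, R =>
    match cellList.find? (fun c => decide (c ∈ R)) with
    | none => if R = ∅ then {∅} else ∅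
    | some c =>
      (placements.filter (fun P => c ∈ P ∧ P ⊆ R)).biUnion
        (fun P => (enum fuel (R \ P)).image (insert P))

def Good (R : Finset (ℤ × ℤ)) (T : Finset (Finset (ℤ × ℤ))) : Prop :=
  (∀ P ∈ T, P ∈ placements) ∧ (∀ P ∈ T, ∀ Q ∈ T, P ≠ Q → Disjoint P Q) ∧
  T.biUnion id = R

lemma good_empty {R T} (hR : R = ∅) : Good R T ↔ T = ∅ := by
  subst hR
  constructor
  · rintro ⟨h1, _, h3⟩
    by_contra hne
    obtain ⟨P, hP⟩ := Finset.nonempty_iff_ne_empty.2 hne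
    obtain ⟨x, hx⟩ := placements_nonempty P (h1 P hP)
    have : x ∈ (∅ : Finset (ℤ × ℤ)) := h3 ▸ Finset.mem_biUnion.2 ⟨P, hP, hx⟩
    simp at this
  · rintro rfl
    exact ⟨by simp, by simp, by simp⟩

lemma enum_spec : ∀ fuel R, R ⊆ Rect 6 4 → R.card ≤ fuel →
    ∀ T, T ∈ enum fuel R ↔ Good R T := by
  intro fuel
  induction fuel with
  | zero =>
    intro R hR hcard T
    have hRe : R = ∅ := Finset.card_eq_zero.1 (Nat.le_zero.1 hcard)
    simp only [enum, if_pos hRe, Finset.mem_singleton]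
    exact (good_empty hRe).symm
  | succ n ih =>
    intro R hR hcard T
    cases hfind : cellList.find? (fun c => decide (c ∈ R)) with
    | none =>
      have hRe : R = ∅ := by
        by_contra hne
        obtain ⟨x, hx⟩ := Finset.nonempty_iff_ne_empty.2 hne
        have := List.find?_eq_none.1 hfind x (rect_sub_cellList x (hR hx))
        simp [hx] at this
      simp only [enum, hfind, if_pos hRe, Finset.mem_singleton]
      exact (good_empty hRe).symm
    | some c =>
      have hcR : c ∈ R := by
        have := List.find?_some hfind
        simpa using this
      simp only [enum, hfind, Finset.mem_biUnion, Finset.mem_image]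
      constructor
      · rintro ⟨P, hPmem, T', hT', rfl⟩
        obtain ⟨hPpl, hcP, hPR⟩ := Finset.mem_filter.1 hPmem
        have hsub : R \ P ⊆ Rect 6 4 := (Finset.sdiff_subset).trans hR
        have hlt : (R \ P).card ≤ n := by
          have : (R \ P).card < R.card :=
            Finset.card_lt_card (Finset.ssubset_iff_of_subset Finset.sdiff_subset |>.2
              ⟨c, hcR, by simp [hcP]⟩)
          omega
        obtain ⟨g1, g2, g3⟩ := (ih (R \ P) hsub hlt T').1 hT'
        refine ⟨?_, ?_, ?_⟩
        · intro Q hQ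
          rcases Finset.mem_insert.1 hQ with rfl | hQ
          · exact hPpl
          · exact g1 Q hQ
        · intro Q1 h1 Q2 h2 hne
          have hdisj : ∀ Q ∈ T', Disjoint P Q := by
            intro Q hQ
            have : Q ⊆ R \ P := g3 ▸ Finset.subset_biUnion_of_mem id hQ
            exact Finset.disjoint_left.2 fun x hxP hxQ => (Finset.mem_sdiff.1 (this hxQ)).2 hxP
          rcases Finset.mem_insert.1 h1 with h1e | h1m
          · rcases Finset.mem_insert.1 h2 with h2e | h2m
            · exact absurd (h1e.trans h2e.symm) hne
            · exact h1e ▸ hdisj _ h2m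
          · rcases Finset.mem_insert.1 h2 with h2e | h2m
            · exact h2e ▸ (hdisj _ h1m).symm
            · exact g2 _ h1m _ h2m hne
        · rw [Finset.biUnion_insert, g3]
          simp only [id]
          rw [Finset.union_sdiff_of_subset hPR]
      · rintro ⟨g1, g2, g3⟩
        have hcT : c ∈ T.biUnion id := g3 ▸ hcR
        obtain ⟨P, hPT, hcP⟩ := Finset.mem_biUnion.1 hcT
        have hPR : P ⊆ R := g3 ▸ Finset.subset_biUnion_of_mem id hPT
        have hcP' : c ∈ P := hcP
        refine ⟨P, Finset.mem_filter.2 ⟨g1 P hPT, hcP', hPR⟩, T.erase P, ?_, ?_⟩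
        · have hsub : R \ P ⊆ Rect 6 4 := (Finset.sdiff_subset).trans hR
          have hlt : (R \ P).card ≤ n := by
            have : (R \ P).card < R.card :=
              Finset.card_lt_card (Finset.ssubset_iff_of_subset Finset.sdiff_subset |>.2
                ⟨c, hcR, fun h => (Finset.mem_sdiff.1 h).2 hcP'⟩)
            omega
          refine (ih (R \ P) hsub hlt _).2 ⟨?_, ?_, ?_⟩
          · intro Q hQ; exact g1 Q (Finset.mem_of_mem_erase hQ)
          · intro Q1 h1 Q2 h2 hne
            exact g2 _ (Finset.mem_of_mem_erase h1) _ (Finset.mem_of_mem_erase h2) hne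
          · ext x
            simp only [Finset.mem_biUnion, Finset.mem_sdiff, id]
            constructor
            · rintro ⟨Q, hQ, hxQ⟩
              have hQT := Finset.mem_of_mem_erase hQ
              have hQne := Finset.ne_of_mem_erase hQ
              refine ⟨g3 ▸ Finset.mem_biUnion.2 ⟨Q, hQT, hxQ⟩, fun hxP => ?_⟩
              exact Finset.disjoint_left.1 (g2 _ hQT _ hPT hQne) hxQ hxP
            · rintro ⟨hxR, hxP⟩
              obtain ⟨Q, hQT, hxQ⟩ := Finset.mem_biUnion.1 (g3 ▸ hxR : x ∈ T.biUnion id)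
              exact ⟨Q, Finset.mem_erase.2 ⟨fun h => hxP (h ▸ hxQ), hQT⟩, hxQ⟩
        · exact Finset.insert_erase hPT

set_option maxHeartbeats 1000000 in
/-- the number of tilings of a 4×6 rectangle by right trominoes is 18. -/
theorem right_tromino_4x6_count :
    {T | IsTiling Rshapes (Rect 6 4) T}.ncard = 18 := by
  have hset : {T | IsTiling Rshapes (Rect 6 4) T} = ↑(enum 24 (Rect 6 4)) := by
    ext T
    simp only [Set.mem_setOf_eq, Finset.mem_coe]
    rw [enum_spec 24 (Rect 6 4) (le_refl _) (by decide) T]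
    constructor
    · rintro ⟨h1, h2, h3⟩
      refine ⟨?_, h2, h3⟩
      intro P hP
      obtain ⟨s, hs, v, rfl⟩ := h1 P hP
      exact placements_complete hs (h3 ▸ Finset.subset_biUnion_of_mem id hP)
    · rintro ⟨h1, h2, h3⟩
      exact ⟨fun P hP => placements_sound (h1 P hP), h2, h3⟩
  rw [hset, Set.ncard_coe_finset]
  decide
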